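/- Let C(x,y) = Σ_{n≥1} (Σ_{i≥1} c(n,i) y^i) x^n, viewed as a formal power series in x with coefficients in the polynomial ring ℤ[y]. Then (1 - (2 + y + y²)·x + (1 - y)(1 - 2y - y²)·x²) · C(x,y) = 2y(1 + y)·x - 2y(1 - y)(1 - 2y)·x². Equivalently, C(x,y) equals the rational function 2xy(1 + y - x(1 - y)(1 - 2y)) / (1 - x(2 + y + y²) + x²(1 - y)(1 - 5y² - 2y(1 - 2y))). -/

import Mathlib

open SimpleGraph Polynomial

/-- A 2-colored partition of a simple graph `G`: a partition of the vertex set into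
nonempty parts, each inducing a connected subgraph, together with an assignment of one
of two colors to each part such that distinct parts joined by an edge get different colors. -/
structure TwoColoredPartition {V : Type*} (G : SimpleGraph V) where
  parts : Set (Set V)
  nonempty : ∀ p ∈ parts, p.Nonempty
  covers : ∀ v : V, ∃ p, p ∈ parts ∧ v ∈ p
  disj : ∀ p ∈ parts, ∀ q ∈ parts, p ≠ q → Disjoint p q
  conn : ∀ p ∈ parts, (G.induce p).Connected
  color : parts → Fin 2
  proper : ∀ p q : parts, p ≠ q →
    (∃ v ∈ (p : Set V), ∃ w ∈ (q : Set V), G.Adj v w) → color p ≠ color q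

/-- The size of a 2-colored partition: its number of parts. -/
noncomputable def TwoColoredPartition.size {V : Type*} {G : SimpleGraph V}
    (T : TwoColoredPartition G) : ℕ :=
  T.parts.ncard

/-- `c n i` is the number of 2-colored partitions of the `2 × n` grid graph `P₂ × Pₙ` of
size `i`, i.e. the number of tilings of a `2 × n` grid with exactly `i` polyominoes
colored with one of two colors so that adjacent polyominoes get different colors. -/
noncomputable def c (n i : ℕ) : ℕ :=
  Nat.card {T : TwoColoredPartition (pathGraph 2 □ pathGraph n) // T.size = i}

/-- `C(x,y) = ∑_{n ≥ 1} (∑_{i ≥ 1} c(n,i) yⁱ) xⁿ`, a formal power series in `x`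
with coefficients in `ℤ[y]`. -/
noncomputable def Cser : PowerSeries (Polynomial ℤ) :=
  PowerSeries.mk fun n =>
    if n = 0 then 0 else ∑ᶠ (i : ℕ) (_ : 1 ≤ i), Polynomial.monomial i (c n i : ℤ)

namespace GridAux

variable {V : Type*} (G : SimpleGraph V)

/-- The graph of monochromatic edges of `G` under a coloring `κ`. -/
def mono (κ : V → Fin 2) : SimpleGraph V where
  Adj v w := G.Adj v w ∧ κ v = κ w
  symm := ⟨fun _ _ h => ⟨h.1.symm, h.2.symm⟩⟩
  loopless := ⟨fun v h => G.loopless.irrefl v h.1⟩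

variable {G}

lemma mono_adj {κ : V → Fin 2} {v w : V} :
    (mono G κ).Adj v w ↔ G.Adj v w ∧ κ v = κ w := Iff.rfl

lemma mono_color {κ : V → Fin 2} {v w : V} (h : (mono G κ).Reachable v w) : κ v = κ w := by
  obtain ⟨p⟩ := h
  induction p with
  | nil => rfl
  | cons h _ ih => exact h.2.trans ih

lemma mono_supp_color {κ : V → Fin 2} {c : (mono G κ).ConnectedComponent} {v w : V}
    (hv : v ∈ c.supp) (hw : w ∈ c.supp) : κ v = κ w := by
  rw [ConnectedComponent.mem_supp_iff] at hv hw
  exact mono_color ((ConnectedComponent.eq).mp (hv.trans hw.symm))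

lemma induce_reach {κ : V → Fin 2} {c : (mono G κ).ConnectedComponent} {u w : V}
    (p : (mono G κ).Walk u w) (hu : u ∈ c.supp) (hw : w ∈ c.supp) :
    (G.induce c.supp).Reachable ⟨u, hu⟩ ⟨w, hw⟩ := by
  induction p with
  | nil => exact Reachable.refl _
  | @cons a b d hab p ih =>
    have hb : b ∈ c.supp := by
      rw [ConnectedComponent.mem_supp_iff] at hu ⊢
      rw [← hu]
      exact (ConnectedComponent.eq).mpr hab.reachable.symm
    have hadj : (G.induce c.supp).Adj ⟨a, hu⟩ ⟨b, hb⟩ := by exact hab.1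
    exact hadj.reachable.trans (ih hb hw)

/-- The 2-colored partition associated to a coloring: parts are the connected
components of the monochromatic graph. -/
noncomputable def partitionOf (κ : V → Fin 2) : TwoColoredPartition G where
  parts := Set.range (fun c : (mono G κ).ConnectedComponent => c.supp)
  nonempty := by
    rintro p ⟨c, rfl⟩
    obtain ⟨v, hv⟩ := c.exists_rep
    exact ⟨v, by rw [ConnectedComponent.mem_supp_iff]; exact hv⟩
  covers := fun v =>
    ⟨((mono G κ).connectedComponentMk v).supp, ⟨_, rfl⟩, by simp⟩
  disj := by
    rintro p ⟨c, rfl⟩ q ⟨c', rfl⟩ hne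
    rw [Set.disjoint_left]
    intro v hv hv'
    rw [ConnectedComponent.mem_supp_iff] at hv hv'
    exact hne (by rw [← hv, hv'])
  conn := by
    rintro p ⟨c, rfl⟩
    obtain ⟨v, hv⟩ := c.exists_rep
    have hv' : v ∈ c.supp := by rw [ConnectedComponent.mem_supp_iff]; exact hv
    rw [connected_iff]
    refine ⟨?_, ⟨⟨v, hv'⟩⟩⟩
    rintro ⟨a, ha⟩ ⟨b, hb⟩
    have : (mono G κ).Reachable a b := by
      rw [ConnectedComponent.mem_supp_iff] at ha hb
      exact (ConnectedComponent.eq).mp (ha.trans hb.symm)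
    obtain ⟨p⟩ := this
    exact induce_reach p ha hb
  color := fun p => κ p.2.choose.exists_rep.choose
  proper := by
    rintro ⟨p, hp⟩ ⟨q, hq⟩ hne ⟨v, hv, w, hw, hadj⟩ hcol
    apply hne
    have hps : hp.choose.supp = p := hp.choose_spec
    have hqs : hq.choose.supp = q := hq.choose_spec
    have hv' : v ∈ hp.choose.supp := by rw [hps]; exact hv
    have hw' : w ∈ hq.choose.supp := by rw [hqs]; exact hw
    have hrp : hp.choose.exists_rep.choose ∈ hp.choose.supp := by
      rw [ConnectedComponent.mem_supp_iff]; exact hp.choose.exists_rep.choose_spec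
    have hrq : hq.choose.exists_rep.choose ∈ hq.choose.supp := by
      rw [ConnectedComponent.mem_supp_iff]; exact hq.choose.exists_rep.choose_spec
    have hveq : κ v = κ w := by
      have h1 : κ v = κ hp.choose.exists_rep.choose := mono_supp_color hv' hrp
      have h2 : κ w = κ hq.choose.exists_rep.choose := mono_supp_color hw' hrq
      rw [h1, h2]; exact hcol
    have hmadj : (mono G κ).Adj v w := ⟨hadj, hveq⟩
    have hsame : (mono G κ).connectedComponentMk v = (mono G κ).connectedComponentMk w :=
      (ConnectedComponent.eq).mpr hmadj.reachable
    apply Subtype.ext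
    show p = q
    rw [ConnectedComponent.mem_supp_iff] at hv' hw'
    rw [← hps, ← hqs, ← hv', ← hw', hsame]

end GridAux

namespace TCPAux
open GridAux

variable {V : Type*} {G : SimpleGraph V}

lemma TwoColoredPartition.ext' {T U : TwoColoredPartition G} (hp : T.parts = U.parts)
    (hc : ∀ (p : Set V) (h1 : p ∈ T.parts) (h2 : p ∈ U.parts),
      T.color ⟨p, h1⟩ = U.color ⟨p, h2⟩) : T = U := by
  obtain ⟨Tp, Tn, Tc, Td, Tcon, Tcol, Tprop⟩ := T
  obtain ⟨Up, Un, Uc, Ud, Ucon, Ucol, Uprop⟩ := U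
  dsimp only at hp
  subst hp
  have : Tcol = Ucol := funext fun p => hc p.1 p.2 p.2
  subst this
  rfl

noncomputable def partOf (T : TwoColoredPartition G) (v : V) : Set V :=
  (T.covers v).choose

lemma partOf_mem (T : TwoColoredPartition G) (v : V) : partOf T v ∈ T.parts :=
  (T.covers v).choose_spec.1

lemma mem_partOf (T : TwoColoredPartition G) (v : V) : v ∈ partOf T v :=
  (T.covers v).choose_spec.2

lemma partOf_unique (T : TwoColoredPartition G) {v : V} {p : Set V}
    (hp : p ∈ T.parts) (hv : v ∈ p) : p = partOf T v := by
  by_contra hne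
  exact Set.disjoint_left.mp (T.disj p hp _ (partOf_mem T v) hne) hv (mem_partOf T v)

noncomputable def colorOf (T : TwoColoredPartition G) (v : V) : Fin 2 :=
  T.color ⟨partOf T v, partOf_mem T v⟩

lemma colorOf_eq (T : TwoColoredPartition G) {v : V} {p : Set V}
    (hp : p ∈ T.parts) (hv : v ∈ p) : colorOf T v = T.color ⟨p, hp⟩ := by
  unfold colorOf
  congr 1
  exact Subtype.ext (partOf_unique T hp hv).symm

/-- A monochromatic step stays within one part. -/
lemma partOf_adj (T : TwoColoredPartition G) {a b : V}
    (h : (mono G (colorOf T)).Adj a b) : partOf T a = partOf T b := by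
  by_contra hne
  have hne' : (⟨partOf T a, partOf_mem T a⟩ : T.parts) ≠ ⟨partOf T b, partOf_mem T b⟩ :=
    fun he => hne (congrArg Subtype.val he)
  exact T.proper _ _ hne' ⟨a, mem_partOf T a, b, mem_partOf T b, h.1⟩ h.2

lemma partOf_reachable (T : TwoColoredPartition G) {a b : V}
    (h : (mono G (colorOf T)).Reachable a b) : partOf T a = partOf T b := by
  obtain ⟨p⟩ := h
  induction p with
  | nil => rfl
  | cons h _ ih => exact (partOf_adj T h).trans ih

lemma reachable_of_mem_partOf (T : TwoColoredPartition G) {a b : V}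
    (hb : b ∈ partOf T a) : (mono G (colorOf T)).Reachable a b := by
  have hconn := T.conn _ (partOf_mem T a)
  rw [connected_iff] at hconn
  obtain ⟨hpre, -⟩ := hconn
  obtain ⟨p⟩ := hpre ⟨a, mem_partOf T a⟩ ⟨b, hb⟩
  have key : ∀ (x y : ↥(partOf T a)) (q : (G.induce (partOf T a)).Walk x y),
      (mono G (colorOf T)).Reachable x.1 y.1 := by
    intro x y q
    induction q with
    | nil => exact Reachable.refl _
    | @cons c d e hcd _ ih =>
      have hGadj : G.Adj c.1 d.1 := hcd
      have hcol : colorOf T c.1 = colorOf T d.1 := by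
        rw [colorOf_eq T (partOf_mem T a) c.2, colorOf_eq T (partOf_mem T a) d.2]
      have hm : (mono G (colorOf T)).Adj c.1 d.1 := ⟨hGadj, hcol⟩
      exact hm.reachable.trans ih
  exact key _ _ p

lemma supp_eq_partOf (T : TwoColoredPartition G) (v : V) :
    ((mono G (colorOf T)).connectedComponentMk v).supp = partOf T v := by
  ext w
  rw [ConnectedComponent.mem_supp_iff, ConnectedComponent.eq]
  constructor
  · intro h
    have h2 := partOf_reachable T h
    rw [← h2]
    exact mem_partOf T w
  · intro hw
    exact (reachable_of_mem_partOf T hw).symm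

lemma partitionOf_colorOf (T : TwoColoredPartition G) :
    partitionOf (colorOf T) = T := by
  have hparts : (partitionOf (G := G) (colorOf T)).parts = T.parts := by
    ext p
    constructor
    · rintro ⟨c, rfl⟩
      obtain ⟨v, hv⟩ := c.exists_rep
      have hcs : c.supp = partOf T v := by rw [← hv]; exact supp_eq_partOf T v
      show c.supp ∈ T.parts
      rw [hcs]
      exact partOf_mem T v
    · intro hp
      obtain ⟨v, hv⟩ := T.nonempty p hp
      have : p = partOf T v := partOf_unique T hp hv
      refine ⟨(mono G (colorOf T)).connectedComponentMk v, ?_⟩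
      show ((mono G (colorOf T)).connectedComponentMk v).supp = p
      rw [supp_eq_partOf T v, ← this]
  apply TwoColoredPartition.ext' hparts
  intro p h1 h2
  -- color of partitionOf at p is colorOf T at some representative in p
  have hps : h1.choose.supp = p := h1.choose_spec
  have hrep : h1.choose.exists_rep.choose ∈ p := by
    have h3 : h1.choose.exists_rep.choose ∈ h1.choose.supp := by
      rw [ConnectedComponent.mem_supp_iff]
      exact h1.choose.exists_rep.choose_spec
    rw [hps] at h3
    exact h3
  show colorOf T h1.choose.exists_rep.choose = T.color ⟨p, h2⟩
  exact colorOf_eq T h2 hrep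

lemma colorOf_partitionOf (κ : V → Fin 2) :
    colorOf (partitionOf (G := G) κ) = κ := by
  funext v
  set T := partitionOf (G := G) κ with hT
  -- colorOf T v = T.color ⟨partOf T v, _⟩ ; partOf T v is the supp of the component of v
  have hmem : v ∈ ((mono G κ).connectedComponentMk v).supp := by simp
  have hp : ((mono G κ).connectedComponentMk v).supp ∈ T.parts := ⟨_, rfl⟩
  rw [colorOf_eq T hp hmem]
  -- T.color at this part is κ of the chosen representative
  show κ hp.choose.exists_rep.choose = κ v
  have hps : hp.choose.supp = ((mono G κ).connectedComponentMk v).supp := hp.choose_spec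
  have hrep : hp.choose.exists_rep.choose ∈ hp.choose.supp := by
    rw [ConnectedComponent.mem_supp_iff]
    exact hp.choose.exists_rep.choose_spec
  refine mono_supp_color (c := (mono G κ).connectedComponentMk v) ?_ hmem
  rw [hps] at hrep
  exact hrep

noncomputable def tcpEquiv : TwoColoredPartition G ≃ (V → Fin 2) where
  toFun := colorOf
  invFun := partitionOf
  left_inv := partitionOf_colorOf
  right_inv := colorOf_partitionOf

lemma size_partitionOf (κ : V → Fin 2) :
    (partitionOf (G := G) κ).size = Nat.card ((mono G κ).ConnectedComponent) := by
  show (Set.range (fun c : (mono G κ).ConnectedComponent => c.supp)).ncard = _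
  rw [← Set.image_univ, Set.ncard_image_of_injective _ ConnectedComponent.supp_injective,
    Set.ncard_univ]

lemma card_size_eq (i : ℕ) :
    Nat.card {T : TwoColoredPartition G // T.size = i}
      = Nat.card {κ : V → Fin 2 // Nat.card ((mono G κ).ConnectedComponent) = i} := by
  apply Nat.card_congr
  refine Equiv.subtypeEquiv tcpEquiv fun T => ?_
  show T.size = i ↔ Nat.card ((mono G (colorOf T)).ConnectedComponent) = i
  rw [← size_partitionOf (G := G) (colorOf T), partitionOf_colorOf]

end TCPAux

namespace GridAux
open TCPAux

abbrev GV (n : ℕ) := Fin 2 × Fin n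
abbrev Grid (n : ℕ) : SimpleGraph (GV n) := pathGraph 2 □ pathGraph n

lemma fin2cases (r : Fin 2) : r = 0 ∨ r = 1 := by revert r; decide

lemma fin2_eq_of_ne_ne : ∀ {a b c : Fin 2}, a ≠ b → c ≠ b → a = c := by decide

lemma grid_adj {n : ℕ} {v w : GV n} :
    (Grid n).Adj v w ↔
      (v.1 ≠ w.1 ∧ v.2 = w.2) ∨ (((v.2 : ℕ) + 1 = w.2 ∨ (w.2 : ℕ) + 1 = v.2) ∧ v.1 = w.1) := by
  rw [boxProd_adj, pathGraph_two_eq_top, pathGraph_adj]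
  constructor
  · rintro (⟨h1, h2⟩ | ⟨h1, h2⟩)
    · exact Or.inl ⟨h1.ne, h2⟩
    · exact Or.inr ⟨h1, h2⟩
  · rintro (⟨h1, h2⟩ | ⟨h1, h2⟩)
    · exact Or.inl ⟨h1, h2⟩
    · exact Or.inr ⟨h1, h2⟩

lemma grid_adj_vert {n : ℕ} (j : Fin n) {r r' : Fin 2} (h : r ≠ r') :
    (Grid n).Adj (r, j) (r', j) := grid_adj.mpr (Or.inl ⟨h, rfl⟩)

lemma grid_adj_horiz {n : ℕ} (r : Fin 2) {j j' : Fin n} (h : (j : ℕ) + 1 = j') :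
    (Grid n).Adj (r, j) (r, j') := grid_adj.mpr (Or.inr ⟨Or.inl h, rfl⟩)

/-- `v` is the "seed" (lexicographically minimal element) of its monochromatic component. -/
def isSeed {n : ℕ} (κ : GV n → Fin 2) (v : GV n) : Prop :=
  (v.1 = 0 ∧ (∀ j' : Fin n, (j' : ℕ) + 1 = v.2 → κ (0, j') ≠ κ (0, v.2)) ∧
      (κ (1, v.2) = κ (0, v.2) → ∀ j' : Fin n, (j' : ℕ) + 1 = v.2 → κ (1, j') ≠ κ (1, v.2)))
  ∨ (v.1 = 1 ∧ κ (0, v.2) ≠ κ (1, v.2) ∧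
      ∀ j' : Fin n, (j' : ℕ) + 1 = v.2 → κ (1, j') ≠ κ (1, v.2))

instance {n : ℕ} (κ : GV n → Fin 2) : DecidablePred (isSeed κ) := fun _ => by
  unfold isSeed; infer_instance

lemma seed_blocked {n : ℕ} {κ : GV n → Fin 2} {v : GV n} (hs : isSeed κ v) :
    ∀ r' : Fin 2, κ (r', v.2) = κ v → ∀ j' : Fin n, (j' : ℕ) + 1 = v.2 →
      κ (r', j') ≠ κ (r', v.2) := by
  intro r' hcol j' hj'
  rcases hs with ⟨h0, hb1, hb2⟩ | ⟨h1, hb1, hb2⟩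
  · have hv : v = (0, v.2) := by rw [← h0]
    rcases fin2cases r' with rfl | rfl
    · exact hb1 j' hj'
    · exact hb2 (by rw [hcol, hv]) j' hj'
  · have hv : v = (1, v.2) := by rw [← h1]
    rcases fin2cases r' with rfl | rfl
    · intro _
      exact hb1 (by rw [hcol, hv])
    · exact hb2 j' hj'

lemma reach_col_ge {n : ℕ} {κ : GV n → Fin 2} {v w : GV n}
    (hP : ∀ r' : Fin 2, κ (r', v.2) = κ v → ∀ j' : Fin n, (j' : ℕ) + 1 = v.2 →
      κ (r', j') ≠ κ (r', v.2))
    (h : (mono (Grid n) κ).Reachable v w) : (v.2 : ℕ) ≤ w.2 := by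
  obtain ⟨p⟩ := h
  have main : ∀ i, (v.2 : ℕ) ≤ (p.getVert i).2 ∧ κ (p.getVert i) = κ v := by
    intro i
    induction i with
    | zero => simp [Walk.getVert_zero]
    | succ i ih =>
      by_cases hi : i < p.length
      · obtain ⟨hle, hcol⟩ := ih
        obtain ⟨hG, hκ⟩ := (p.adj_getVert_succ hi : (mono (Grid n) κ).Adj _ _)
        refine ⟨?_, by rw [← hκ, hcol]⟩
        rcases grid_adj.mp hG with ⟨_, h2⟩ | ⟨hor, hrow⟩
        · rw [← h2]; exact hle
        · rcases hor with hr | hl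
          · omega
          · -- step to the left
            rcases Nat.lt_or_ge (v.2 : ℕ) ((p.getVert i).2 : ℕ) with hgt | hge
            · omega
            · -- (p.getVert i).2 = v.2, contradiction with hP
              exfalso
              have hcoleq : ((p.getVert i).2 : ℕ) = (v.2 : ℕ) := le_antisymm hge hle
              have hfin : (p.getVert i).2 = v.2 := Fin.ext hcoleq
              have h1 : κ ((p.getVert i).1, v.2) = κ v := by
                rw [← hfin]
                have : ((p.getVert i).1, (p.getVert i).2) = p.getVert i := rfl
                rw [this]; exact hcol
              have hj' : ((p.getVert (i+1)).2 : ℕ) + 1 = (v.2 : ℕ) := by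
                rw [← hcoleq]; exact hl
              have := hP (p.getVert i).1 h1 (p.getVert (i+1)).2 hj'
              apply this
              have e1 : ((p.getVert i).1, (p.getVert (i+1)).2) = p.getVert (i+1) := by
                rw [hrow]
              have e2 : ((p.getVert i).1, v.2) = p.getVert i := by
                rw [← hfin]
              rw [e1, e2]
              exact hκ.symm
      · have e1 : p.getVert (i + 1) = p.getVert i := by
          rw [p.getVert_of_length_le (Nat.le_of_not_lt hi),
            p.getVert_of_length_le (by omega : p.length ≤ i + 1)]
        rw [e1]; exact ih
  have := main p.length
  rw [p.getVert_length] at this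
  exact this.1

lemma seed_unique {n : ℕ} {κ : GV n → Fin 2} {u u' : GV n}
    (hu : isSeed κ u) (hu' : isSeed κ u')
    (h : (mono (Grid n) κ).Reachable u u') : u = u' := by
  have h1 : (u.2 : ℕ) ≤ u'.2 := reach_col_ge (seed_blocked hu) h
  have h2 : (u'.2 : ℕ) ≤ u.2 := reach_col_ge (seed_blocked hu') h.symm
  have hcol2 : u.2 = u'.2 := Fin.ext (le_antisymm h1 h2)
  have hκ : κ u = κ u' := mono_color h
  rcases fin2cases u.1 with e | e <;> rcases fin2cases u'.1 with e' | e'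
  · exact Prod.ext (e.trans e'.symm) hcol2
  · exfalso
    rcases hu' with ⟨h0, _, _⟩ | ⟨_, hb, _⟩
    · rw [e'] at h0; exact absurd h0 (by decide)
    · apply hb
      have eu : u = (0, u.2) := by rw [← e]
      have eu' : u' = (1, u'.2) := by rw [← e']
      calc κ (0, u'.2) = κ u := by rw [eu, hcol2]
        _ = κ u' := hκ
        _ = κ (1, u'.2) := by rw [← eu']
  · exfalso
    rcases hu with ⟨h0, _, _⟩ | ⟨_, hb, _⟩
    · rw [e] at h0; exact absurd h0 (by decide)
    · apply hb
      have eu : u = (1, u.2) := by rw [← e]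
      have eu' : u' = (0, u'.2) := by rw [← e']
      calc κ (0, u.2) = κ u' := by rw [eu', hcol2]
        _ = κ u := hκ.symm
        _ = κ (1, u.2) := by rw [← eu]
  · exact Prod.ext (e.trans e'.symm) hcol2

end GridAux

namespace GridAux

lemma seed_exists {n : ℕ} (κ : GV n → Fin 2) (v : GV n) :
    ∃ u : GV n, (mono (Grid n) κ).Reachable v u ∧ isSeed κ u := by
  classical
  have hne : (Finset.univ.filter fun w => (mono (Grid n) κ).Reachable v w).Nonempty :=
    ⟨v, Finset.mem_filter.mpr ⟨Finset.mem_univ v, Reachable.refl v⟩⟩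
  obtain ⟨u, hu, hmin⟩ := Finset.exists_min_image _ (fun w : GV n => 2 * (w.2 : ℕ) + w.1) hne
  rw [Finset.mem_filter] at hu
  refine ⟨u, hu.2, ?_⟩
  have hmin' : ∀ x : GV n, (mono (Grid n) κ).Reachable v x →
      2 * (u.2 : ℕ) + (u.1 : ℕ) ≤ 2 * (x.2 : ℕ) + x.1 := fun x hx =>
    hmin x (Finset.mem_filter.mpr ⟨Finset.mem_univ x, hx⟩)
  rcases fin2cases u.1 with e | e
  · have eu : u = (0, u.2) := by rw [← e]
    left
    refine ⟨e, ?_, ?_⟩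
    · intro j' hj' hcc
      have hadj : (mono (Grid n) κ).Adj u (0, j') := by
        refine ⟨?_, ?_⟩
        · rw [eu]; exact (grid_adj_horiz 0 hj').symm
        · rw [eu]; exact hcc.symm
      have := hmin' (0, j') (hu.2.trans hadj.reachable)
      simp only [e] at this ⊢
      omega
    · intro hvc j' hj' hcc
      have hadj1 : (mono (Grid n) κ).Adj u (1, u.2) := by
        refine ⟨?_, ?_⟩
        · rw [eu]; exact grid_adj_vert u.2 (by decide)
        · rw [eu]; exact hvc.symm
      have hadj2 : (mono (Grid n) κ).Adj (1, u.2) (1, j') := by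
        refine ⟨?_, hcc.symm⟩
        exact (grid_adj_horiz 1 hj').symm
      have := hmin' (1, j') ((hu.2.trans hadj1.reachable).trans hadj2.reachable)
      simp only [e] at this ⊢
      omega
  · have eu : u = (1, u.2) := by rw [← e]
    right
    refine ⟨e, ?_, ?_⟩
    · intro hcc
      have hadj : (mono (Grid n) κ).Adj u (0, u.2) := by
        refine ⟨?_, ?_⟩
        · rw [eu]; exact grid_adj_vert u.2 (by decide)
        · rw [eu]; exact hcc.symm
      have := hmin' (0, u.2) (hu.2.trans hadj.reachable)
      simp only [e] at this ⊢
      omega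
    · intro j' hj' hcc
      have hadj : (mono (Grid n) κ).Adj u (1, j') := by
        refine ⟨?_, ?_⟩
        · rw [eu]; exact (grid_adj_horiz 1 hj').symm
        · rw [eu]; exact hcc.symm
      have := hmin' (1, j') (hu.2.trans hadj.reachable)
      simp only [e] at this ⊢
      omega

/-- The number of monochromatic components equals the number of seeds. -/
lemma ccount_eq_seeds {n : ℕ} (κ : GV n → Fin 2) :
    Nat.card ((mono (Grid n) κ).ConnectedComponent)
      = (Finset.univ.filter (isSeed κ)).card := by
  have hbij : Function.Bijective
      (fun u : {u : GV n // isSeed κ u} => (mono (Grid n) κ).connectedComponentMk u.1) := by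
    constructor
    · rintro ⟨u, hu⟩ ⟨u', hu'⟩ h
      exact Subtype.ext (seed_unique hu hu' (ConnectedComponent.eq.mp h))
    · intro c
      obtain ⟨v, hv⟩ := c.exists_rep
      obtain ⟨u, hr, hs⟩ := seed_exists κ v
      exact ⟨⟨u, hs⟩, by rw [← hv]; exact (ConnectedComponent.eq.mpr hr.symm)⟩
  rw [← Nat.card_congr (Equiv.ofBijective _ hbij), Nat.card_eq_fintype_card,
    Fintype.card_subtype]

end GridAux

namespace GridAux

def nseeds {n : ℕ} (κ : GV n → Fin 2) : ℕ := (Finset.univ.filter (isSeed κ)).card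

def lastcol {m : ℕ} (κ : GV (m + 1) → Fin 2) : Fin 2 → Fin 2 := fun r => κ (r, Fin.last m)

def ext1 {m : ℕ} (κ : GV (m + 1) → Fin 2) (b : Fin 2 → Fin 2) : GV (m + 2) → Fin 2 :=
  fun v => Fin.lastCases (b v.1) (fun j => κ (v.1, j)) v.2

@[simp] lemma ext1_castSucc {m : ℕ} (κ : GV (m + 1) → Fin 2) (b : Fin 2 → Fin 2)
    (r : Fin 2) (j : Fin (m + 1)) : ext1 κ b (r, j.castSucc) = κ (r, j) := by
  unfold ext1; exact Fin.lastCases_castSucc j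

@[simp] lemma ext1_last {m : ℕ} (κ : GV (m + 1) → Fin 2) (b : Fin 2 → Fin 2)
    (r : Fin 2) : ext1 κ b (r, Fin.last (m + 1)) = b r := by
  unfold ext1; exact Fin.lastCases_last

/-- Number of seeds contributed by a new column `b` after a column `a`. -/
def σc (a b : Fin 2 → Fin 2) : ℕ :=
  (if a 0 ≠ b 0 ∧ (b 1 = b 0 → a 1 ≠ b 1) then 1 else 0) +
  (if b 0 ≠ b 1 ∧ a 1 ≠ b 1 then 1 else 0)

lemma isSeed_zero {n : ℕ} (κ : GV n → Fin 2) (j : Fin n) :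
    isSeed κ ((0 : Fin 2), j) ↔
      (∀ j' : Fin n, (j' : ℕ) + 1 = (j : ℕ) → κ (0, j') ≠ κ (0, j)) ∧
      (κ (1, j) = κ (0, j) → ∀ j' : Fin n, (j' : ℕ) + 1 = (j : ℕ) → κ (1, j') ≠ κ (1, j)) := by
  unfold isSeed
  constructor
  · rintro (⟨-, h⟩ | ⟨h0, -⟩)
    · exact h
    · have hne : ((0 : Fin 2)) ≠ 1 := by decide
      exact absurd h0 hne
  · intro h; exact Or.inl ⟨rfl, h⟩

lemma isSeed_one {n : ℕ} (κ : GV n → Fin 2) (j : Fin n) :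
    isSeed κ ((1 : Fin 2), j) ↔
      κ (0, j) ≠ κ (1, j) ∧
      (∀ j' : Fin n, (j' : ℕ) + 1 = (j : ℕ) → κ (1, j') ≠ κ (1, j)) := by
  unfold isSeed
  constructor
  · rintro (⟨h0, -⟩ | ⟨-, h⟩)
    · have hne : ((1 : Fin 2)) ≠ 0 := by decide
      exact absurd h0 hne
    · exact h
  · intro h; exact Or.inr ⟨rfl, h⟩

lemma forall_pred_castSucc {m : ℕ} (j : Fin (m + 1)) (Q : Fin (m + 2) → Prop) :
    (∀ j' : Fin (m + 2), (j' : ℕ) + 1 = ((j.castSucc : Fin (m + 2)) : ℕ) → Q j') ↔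
      (∀ j'' : Fin (m + 1), (j'' : ℕ) + 1 = (j : ℕ) → Q j''.castSucc) := by
  constructor
  · intro h j'' hj''
    exact h j''.castSucc (by simpa using hj'')
  · intro h j' hj'
    simp only [Fin.coe_castSucc] at hj'
    have hlt : (j' : ℕ) < m + 1 := by have := j.isLt; omega
    have he : j' = (⟨(j' : ℕ), hlt⟩ : Fin (m + 1)).castSucc := by
      apply Fin.ext; simp
    rw [he]
    exact h _ (by simpa using hj')

lemma forall_pred_last {m : ℕ} (Q : Fin (m + 2) → Prop) :
    (∀ j' : Fin (m + 2), (j' : ℕ) + 1 = ((Fin.last (m + 1)) : ℕ) → Q j') ↔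
      Q ((Fin.last m).castSucc) := by
  constructor
  · intro h
    exact h _ (by simp)
  · intro h j' hj'
    simp only [Fin.val_last] at hj'
    have he : j' = (Fin.last m).castSucc := by
      apply Fin.ext; simp; omega
    rw [he]; exact h

lemma isSeed_ext1_castSucc {m : ℕ} (κ : GV (m + 1) → Fin 2) (b : Fin 2 → Fin 2)
    (r : Fin 2) (j : Fin (m + 1)) :
    isSeed (ext1 κ b) (r, j.castSucc) ↔ isSeed κ (r, j) := by
  rcases fin2cases r with rfl | rfl
  · rw [isSeed_zero, isSeed_zero]
    rw [forall_pred_castSucc j (fun j' => ext1 κ b (0, j') ≠ ext1 κ b (0, j.castSucc))]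
    simp only [ext1_castSucc]
    constructor
    · rintro ⟨h1, h2⟩
      refine ⟨h1, fun hc => ?_⟩
      have h3 := h2 hc
      rw [forall_pred_castSucc j (fun j' => ext1 κ b (1, j') ≠ κ (1, j))] at h3
      simpa only [ext1_castSucc] using h3
    · rintro ⟨h1, h2⟩
      refine ⟨h1, fun hc => ?_⟩
      rw [forall_pred_castSucc j (fun j' => ext1 κ b (1, j') ≠ κ (1, j))]
      simpa only [ext1_castSucc] using h2 hc
  · rw [isSeed_one, isSeed_one]
    simp only [ext1_castSucc]
    rw [forall_pred_castSucc j (fun j' => ext1 κ b (1, j') ≠ κ (1, j))]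
    simp only [ext1_castSucc]

lemma isSeed_ext1_last_zero {m : ℕ} (κ : GV (m + 1) → Fin 2) (b : Fin 2 → Fin 2) :
    isSeed (ext1 κ b) ((0 : Fin 2), Fin.last (m + 1)) ↔
      (lastcol κ 0 ≠ b 0 ∧ (b 1 = b 0 → lastcol κ 1 ≠ b 1)) := by
  rw [isSeed_zero]
  rw [forall_pred_last (fun j' => ext1 κ b (0, j') ≠ ext1 κ b (0, Fin.last (m + 1)))]
  rw [forall_pred_last (fun j' => ext1 κ b (1, j') ≠ ext1 κ b (1, Fin.last (m + 1)))]
  simp only [ext1_castSucc, ext1_last]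
  rfl

lemma isSeed_ext1_last_one {m : ℕ} (κ : GV (m + 1) → Fin 2) (b : Fin 2 → Fin 2) :
    isSeed (ext1 κ b) ((1 : Fin 2), Fin.last (m + 1)) ↔
      (b 0 ≠ b 1 ∧ lastcol κ 1 ≠ b 1) := by
  rw [isSeed_one]
  rw [forall_pred_last (fun j' => ext1 κ b (1, j') ≠ ext1 κ b (1, Fin.last (m + 1)))]
  simp only [ext1_castSucc, ext1_last]
  rfl

lemma nseeds_ext1 {m : ℕ} (κ : GV (m + 1) → Fin 2) (b : Fin 2 → Fin 2) :
    nseeds (ext1 κ b) = nseeds κ + σc (lastcol κ) b := by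
  classical
  unfold nseeds
  rw [Finset.card_filter, Finset.card_filter]
  rw [Fintype.sum_prod_type, Fintype.sum_prod_type]
  have hsplit : ∀ r : Fin 2,
      (∑ j : Fin (m + 2), if isSeed (ext1 κ b) (r, j) then 1 else 0)
        = (∑ j : Fin (m + 1), if isSeed κ (r, j) then 1 else 0)
          + (if isSeed (ext1 κ b) (r, Fin.last (m + 1)) then 1 else 0) := by
    intro r
    rw [Fin.sum_univ_castSucc]
    congr 1
    apply Finset.sum_congr rfl
    intro j _
    rw [if_congr (isSeed_ext1_castSucc κ b r j) rfl rfl]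
  rw [Fin.sum_univ_two, Fin.sum_univ_two, hsplit 0, hsplit 1]
  rw [if_congr (isSeed_ext1_last_zero κ b) rfl rfl,
    if_congr (isSeed_ext1_last_one κ b) rfl rfl]
  unfold σc
  ring_nf

lemma nseeds_base (κ : GV 1 → Fin 2) :
    nseeds κ = 1 + (if κ (0, 0) ≠ κ (1, 0) then 1 else 0) := by
  classical
  unfold nseeds
  rw [Finset.card_filter, Fintype.sum_prod_type, Fin.sum_univ_two]
  have e1 : ∀ r : Fin 2, (∑ j : Fin 1, if isSeed κ (r, j) then 1 else 0)
      = if isSeed κ (r, 0) then 1 else 0 := by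
    intro r
    rw [Finset.sum_eq_single 0]
    · intro b _ hb; exact absurd (Subsingleton.elim b 0) hb
    · intro h; exact absurd (Finset.mem_univ _) h
  rw [e1 0, e1 1]
  have h0 : isSeed κ ((0 : Fin 2), (0 : Fin 1)) := by
    rw [isSeed_zero]
    constructor
    · intro j' hj'; exact absurd hj' (by omega)
    · intro _ j' hj'; exact absurd hj' (by omega)
  have h1 : isSeed κ ((1 : Fin 2), (0 : Fin 1)) ↔ κ (0, 0) ≠ κ (1, 0) := by
    rw [isSeed_one]
    constructor
    · exact fun h => h.1
    · intro h; exact ⟨h, fun j' hj' => absurd hj' (by omega)⟩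
  rw [if_pos h0, if_congr h1 rfl rfl]

end GridAux

namespace GridAux
open Polynomial

noncomputable def S (m : ℕ) (b : Fin 2 → Fin 2) : Polynomial ℤ :=
  ∑ κ : GV (m + 1) → Fin 2, if lastcol κ = b then (Polynomial.X : Polynomial ℤ) ^ nseeds κ else 0

noncomputable def Pp (m : ℕ) : Polynomial ℤ :=
  ∑ κ : GV (m + 1) → Fin 2, (Polynomial.X : Polynomial ℤ) ^ nseeds κ

def colEquiv (m : ℕ) : (GV (m + 2) → Fin 2) ≃ ((GV (m + 1) → Fin 2) × (Fin 2 → Fin 2)) where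
  toFun κ := (fun v => κ (v.1, v.2.castSucc), fun r => κ (r, Fin.last (m + 1)))
  invFun p := ext1 p.1 p.2
  left_inv κ := by
    funext v
    obtain ⟨r, j⟩ := v
    refine Fin.lastCases ?_ (fun i => ?_) j
    · exact ext1_last _ _ r
    · exact ext1_castSucc _ _ r i
  right_inv p := by
    obtain ⟨κ, b⟩ := p
    refine Prod.ext ?_ ?_
    · funext v; exact ext1_castSucc _ _ v.1 v.2
    · funext r; exact ext1_last _ _ r

lemma lastcol_ext1 {m : ℕ} (κ : GV (m + 1) → Fin 2) (b : Fin 2 → Fin 2) :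
    lastcol (ext1 κ b) = b := funext fun r => ext1_last κ b r

lemma sum_fin2fun {M : Type*} [AddCommMonoid M] (f : (Fin 2 → Fin 2) → M) :
    ∑ a : Fin 2 → Fin 2, f a = f ![0, 0] + f ![0, 1] + f ![1, 0] + f ![1, 1] := by
  rw [← Equiv.sum_comp (piFinTwoEquiv (fun _ => Fin 2)).symm f, Fintype.sum_prod_type]
  rw [Fin.sum_univ_two]
  conv_lhs => rw [Fin.sum_univ_two, Fin.sum_univ_two]
  have h : ∀ x y : Fin 2, (piFinTwoEquiv (fun _ => Fin 2)).symm (x, y) = ![x, y] := by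
    intro x y; funext r; fin_cases r <;> rfl
  rw [h 0 0, h 0 1, h 1 0, h 1 1]
  abel

lemma S_rec (m : ℕ) (b : Fin 2 → Fin 2) :
    S (m + 1) b = ∑ a : Fin 2 → Fin 2, S m a * Polynomial.X ^ σc a b := by
  classical
  unfold S
  rw [← Equiv.sum_comp (colEquiv m).symm
      (fun κ => if lastcol κ = b then (Polynomial.X : Polynomial ℤ) ^ nseeds κ else 0)]
  rw [Fintype.sum_prod_type]
  have step : ∀ (κ : GV (m + 1) → Fin 2) (c : Fin 2 → Fin 2),
      (if lastcol ((colEquiv m).symm (κ, c)) = b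
        then (Polynomial.X : Polynomial ℤ) ^ nseeds ((colEquiv m).symm (κ, c)) else 0)
      = if c = b then (Polynomial.X : Polynomial ℤ) ^ (nseeds κ + σc (lastcol κ) c) else 0 := by
    intro κ c
    have h1 : lastcol ((colEquiv m).symm (κ, c)) = c := lastcol_ext1 κ c
    have h2 : nseeds ((colEquiv m).symm (κ, c)) = nseeds κ + σc (lastcol κ) c :=
      nseeds_ext1 κ c
    rw [h1, h2]
  calc ∑ κ : GV (m + 1) → Fin 2, ∑ c : Fin 2 → Fin 2,
        (if lastcol ((colEquiv m).symm (κ, c)) = b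
          then (Polynomial.X : Polynomial ℤ) ^ nseeds ((colEquiv m).symm (κ, c)) else 0)
      = ∑ κ : GV (m + 1) → Fin 2, ∑ c : Fin 2 → Fin 2,
          (if c = b then (Polynomial.X : Polynomial ℤ) ^ (nseeds κ + σc (lastcol κ) c) else 0) := by
        apply Finset.sum_congr rfl; intro κ _; apply Finset.sum_congr rfl; intro c _
        exact step κ c
    _ = ∑ κ : GV (m + 1) → Fin 2,
          (Polynomial.X : Polynomial ℤ) ^ (nseeds κ + σc (lastcol κ) b) := by
        apply Finset.sum_congr rfl; intro κ _
        rw [Finset.sum_ite_eq' Finset.univ b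
          (fun c => (Polynomial.X : Polynomial ℤ) ^ (nseeds κ + σc (lastcol κ) c))]
        simp
    _ = ∑ κ : GV (m + 1) → Fin 2, ∑ a : Fin 2 → Fin 2,
          (if lastcol κ = a then (Polynomial.X : Polynomial ℤ) ^ nseeds κ else 0)
            * Polynomial.X ^ σc a b := by
        apply Finset.sum_congr rfl; intro κ _
        rw [Finset.sum_congr rfl (fun a _ => ite_mul _ _ _ _)]
        simp only [zero_mul]
        rw [Finset.sum_ite_eq Finset.univ (lastcol κ)
          (fun a => (Polynomial.X : Polynomial ℤ) ^ nseeds κ * Polynomial.X ^ σc a b)]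
        simp [pow_add]
    _ = ∑ a : Fin 2 → Fin 2, S m a * Polynomial.X ^ σc a b := by
        rw [Finset.sum_comm]
        apply Finset.sum_congr rfl; intro a _
        unfold S
        rw [← Finset.sum_mul]

lemma Pp_eq_sum_S (m : ℕ) : Pp m = ∑ b : Fin 2 → Fin 2, S m b := by
  classical
  unfold Pp S
  rw [Finset.sum_comm]
  apply Finset.sum_congr rfl
  intro κ _
  rw [Finset.sum_ite_eq Finset.univ (lastcol κ)
    (fun _ => (Polynomial.X : Polynomial ℤ) ^ nseeds κ)]
  simp

def oneColEquiv : (GV 1 → Fin 2) ≃ (Fin 2 → Fin 2) where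
  toFun := fun κ r => κ (r, 0)
  invFun := fun c v => c v.1
  left_inv := fun κ => by
    funext v
    have h : v.2 = 0 := Subsingleton.elim _ _
    rw [show v = (v.1, (0 : Fin 1)) from Prod.ext rfl h]
  right_inv := fun c => rfl

lemma S_zero (a : Fin 2 → Fin 2) :
    S 0 a = (Polynomial.X : Polynomial ℤ) ^ (1 + if a 0 ≠ a 1 then 1 else 0) := by
  classical
  unfold S
  set e := oneColEquiv with he
  rw [← Equiv.sum_comp e.symm
    (fun κ => if lastcol κ = a then (Polynomial.X : Polynomial ℤ) ^ nseeds κ else 0)]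
  have key : ∀ c : Fin 2 → Fin 2,
      (if lastcol (e.symm c) = a then (Polynomial.X : Polynomial ℤ) ^ nseeds (e.symm c) else 0)
      = if c = a then (Polynomial.X : Polynomial ℤ) ^ (1 + if c 0 ≠ c 1 then 1 else 0) else 0 := by
    intro c
    have h1 : lastcol (e.symm c) = c := by funext r; rfl
    have h2 : nseeds (e.symm c) = 1 + if c 0 ≠ c 1 then 1 else 0 := by
      rw [nseeds_base]
      rfl
    rw [h1, h2]
  rw [Finset.sum_congr rfl (fun c _ => key c)]
  rw [Finset.sum_ite_eq' Finset.univ a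
    (fun c => (Polynomial.X : Polynomial ℤ) ^ (1 + if c 0 ≠ c 1 then 1 else 0))]
  simp

noncomputable def sP (m : ℕ) : Polynomial ℤ := S m ![0, 0] + S m ![1, 1]
noncomputable def dP (m : ℕ) : Polynomial ℤ := S m ![0, 1] + S m ![1, 0]

lemma sP_zero : sP 0 = 2 * Polynomial.X := by
  unfold sP
  rw [S_zero, S_zero]
  norm_num
  ring

lemma dP_zero : dP 0 = 2 * Polynomial.X ^ 2 := by
  unfold dP
  rw [S_zero, S_zero]
  norm_num
  ring

lemma sP_rec (m : ℕ) : sP (m + 1) = (1 + Polynomial.X) * sP m + 2 * dP m := by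
  unfold sP dP
  rw [S_rec, S_rec, sum_fin2fun (fun a => S m a * Polynomial.X ^ σc a ![0, 0]),
    sum_fin2fun (fun a => S m a * Polynomial.X ^ σc a ![1, 1])]
  have e1 : σc ![0,0] ![0,0] = 0 := by decide
  have e2 : σc ![0,1] ![0,0] = 0 := by decide
  have e3 : σc ![1,0] ![0,0] = 0 := by decide
  have e4 : σc ![1,1] ![0,0] = 1 := by decide
  have f1 : σc ![0,0] ![1,1] = 1 := by decide
  have f2 : σc ![0,1] ![1,1] = 0 := by decide
  have f3 : σc ![1,0] ![1,1] = 0 := by decide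
  have f4 : σc ![1,1] ![1,1] = 0 := by decide
  rw [e1, e2, e3, e4, f1, f2, f3, f4]
  ring

lemma dP_rec (m : ℕ) : dP (m + 1) = 2 * Polynomial.X * sP m + (1 + Polynomial.X ^ 2) * dP m := by
  unfold sP dP
  rw [S_rec, S_rec, sum_fin2fun (fun a => S m a * Polynomial.X ^ σc a ![0, 1]),
    sum_fin2fun (fun a => S m a * Polynomial.X ^ σc a ![1, 0])]
  have e1 : σc ![0,0] ![0,1] = 1 := by decide
  have e2 : σc ![0,1] ![0,1] = 0 := by decide
  have e3 : σc ![1,0] ![0,1] = 2 := by decide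
  have e4 : σc ![1,1] ![0,1] = 1 := by decide
  have f1 : σc ![0,0] ![1,0] = 1 := by decide
  have f2 : σc ![0,1] ![1,0] = 2 := by decide
  have f3 : σc ![1,0] ![1,0] = 0 := by decide
  have f4 : σc ![1,1] ![1,0] = 1 := by decide
  rw [e1, e2, e3, e4, f1, f2, f3, f4]
  ring

lemma Pp_eq (m : ℕ) : Pp m = sP m + dP m := by
  rw [Pp_eq_sum_S, sum_fin2fun (fun b => S m b)]
  unfold sP dP
  ring

lemma Pp_zero : Pp 0 = 2 * Polynomial.X + 2 * Polynomial.X ^ 2 := by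
  rw [Pp_eq, sP_zero, dP_zero]

lemma Pp_one : Pp 1 = 2 * Polynomial.X + 12 * Polynomial.X ^ 2 + 2 * Polynomial.X ^ 4 := by
  rw [Pp_eq, sP_rec, dP_rec, sP_zero, dP_zero]
  ring

lemma Pp_rec (m : ℕ) :
    Pp (m + 2) = (2 + Polynomial.X + Polynomial.X ^ 2) * Pp (m + 1)
      - (1 - Polynomial.X) * (1 - 2 * Polynomial.X - Polynomial.X ^ 2) * Pp m := by
  rw [Pp_eq, Pp_eq, Pp_eq, sP_rec (m + 1), dP_rec (m + 1), sP_rec m, dP_rec m]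
  ring

end GridAux

namespace GridAux
open Polynomial

lemma c_eq_card (n i : ℕ) :
    c n i = (Finset.univ.filter (fun κ : GV n → Fin 2 => nseeds κ = i)).card := by
  unfold c
  rw [TCPAux.card_size_eq (G := Grid n) i]
  have he : {κ : GV n → Fin 2 // Nat.card ((mono (Grid n) κ).ConnectedComponent) = i}
      ≃ {κ : GV n → Fin 2 // nseeds κ = i} :=
    Equiv.subtypeEquiv (Equiv.refl _) (fun κ => by rw [ccount_eq_seeds κ]; exact Iff.rfl)
  rw [Nat.card_congr he, Nat.card_eq_fintype_card, Fintype.card_subtype]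

lemma nseeds_le {n : ℕ} (κ : GV n → Fin 2) : nseeds κ ≤ 2 * n := by
  unfold nseeds
  calc (Finset.univ.filter (isSeed κ)).card ≤ Finset.univ.card := Finset.card_filter_le _ _
    _ = 2 * n := by rw [Finset.card_univ]; simp [Fintype.card_prod]

lemma nseeds_pos {m : ℕ} (κ : GV (m + 1) → Fin 2) : 1 ≤ nseeds κ := by
  obtain ⟨u, -, hs⟩ := seed_exists κ (0, 0)
  have : u ∈ Finset.univ.filter (isSeed κ) :=
    Finset.mem_filter.mpr ⟨Finset.mem_univ u, hs⟩
  exact Finset.card_pos.mpr ⟨u, this⟩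

lemma c_eq_zero_of_big {m i : ℕ} (h : 2 * (m + 1) < i) : c (m + 1) i = 0 := by
  rw [c_eq_card, Finset.card_eq_zero, Finset.filter_eq_empty_iff]
  intro κ _
  have := nseeds_le κ
  omega

lemma c_eq_zero_of_zero (m : ℕ) : c (m + 1) 0 = 0 := by
  rw [c_eq_card, Finset.card_eq_zero, Finset.filter_eq_empty_iff]
  intro κ _
  have := nseeds_pos κ
  omega

lemma Cser_coeff_zero : PowerSeries.coeff (R := Polynomial ℤ) 0 Cser = 0 := by
  unfold Cser
  rw [PowerSeries.coeff_mk]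
  simp

lemma Cser_coeff_succ (m : ℕ) : PowerSeries.coeff (R := Polynomial ℤ) (m + 1) Cser = Pp m := by
  classical
  unfold Cser
  rw [PowerSeries.coeff_mk, if_neg (Nat.succ_ne_zero m)]
  have h1 : ∀ i : ℕ, (∑ᶠ (_ : 1 ≤ i), (Polynomial.monomial i (c (m + 1) i : ℤ)))
      = if 1 ≤ i then Polynomial.monomial i (c (m + 1) i : ℤ) else 0 := fun i => finsum_eq_if
  rw [finsum_congr h1]
  have hsub : (Function.support fun i =>
      if 1 ≤ i then Polynomial.monomial i (c (m + 1) i : ℤ) else 0)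
      ⊆ (Finset.range (2 * (m + 1) + 1) : Set ℕ) := by
    intro i hi
    simp only [Function.mem_support] at hi
    simp only [Finset.coe_range, Set.mem_Iio]
    by_contra hbig
    push_neg at hbig
    have : c (m + 1) i = 0 := c_eq_zero_of_big (by omega)
    rw [this] at hi
    simp at hi
  rw [finsum_eq_sum_of_support_subset _ hsub]
  have h2 : ∀ i ∈ Finset.range (2 * (m + 1) + 1),
      (if 1 ≤ i then Polynomial.monomial i (c (m + 1) i : ℤ) else 0)
        = Polynomial.monomial i (c (m + 1) i : ℤ) := by
    intro i _
    by_cases h : 1 ≤ i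
    · rw [if_pos h]
    · have hi0 : i = 0 := by omega
      rw [if_neg h, hi0, c_eq_zero_of_zero]
      simp
  rw [Finset.sum_congr rfl h2]
  -- now: ∑ i in range N, monomial i (c (m+1) i) = Pp m
  unfold Pp
  rw [← Finset.sum_fiberwise_of_maps_to
    (g := fun κ : GV (m + 1) → Fin 2 => nseeds κ) (t := Finset.range (2 * (m + 1) + 1))
    (fun κ _ => by
      simpa using Finset.mem_range.mpr
        (show nseeds κ < 2 * (m + 1) + 1 by have := nseeds_le κ; omega))
    (fun κ => (Polynomial.X : Polynomial ℤ) ^ nseeds κ)]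
  apply Finset.sum_congr rfl
  intro i _
  have h3 : ∀ κ ∈ Finset.univ.filter (fun κ : GV (m + 1) → Fin 2 => nseeds κ = i),
      (Polynomial.X : Polynomial ℤ) ^ nseeds κ = Polynomial.X ^ i := by
    intro κ hκ
    rw [(Finset.mem_filter.mp hκ).2]
  rw [Finset.sum_congr rfl h3, Finset.sum_const, c_eq_card]
  rw [nsmul_eq_mul, ← Polynomial.C_mul_X_pow_eq_monomial]
  norm_num

end GridAux


open GridAux

/-- `(1 - (2 + y + y²)x + (1 - y)(1 - 2y - y²)x²) · C(x,y)
      = 2y(1 + y)·x - 2y(1 - y)(1 - 2y)·x²`. -/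
theorem genfun_grid_2xn :
    (1 - PowerSeries.C (R := Polynomial ℤ) (2 + Polynomial.X + Polynomial.X ^ 2) * PowerSeries.X
        + PowerSeries.C (R := Polynomial ℤ) ((1 - Polynomial.X) * (1 - 2 * Polynomial.X
            - Polynomial.X ^ 2)) * PowerSeries.X ^ 2) * Cser
      = PowerSeries.C (R := Polynomial ℤ) (2 * Polynomial.X * (1 + Polynomial.X)) * PowerSeries.X
        - PowerSeries.C (R := Polynomial ℤ) (2 * Polynomial.X * (1 - Polynomial.X)
            * (1 - 2 * Polynomial.X)) * PowerSeries.X ^ 2 := by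
  set a : Polynomial ℤ := 2 + Polynomial.X + Polynomial.X ^ 2 with ha
  set b : Polynomial ℤ := (1 - Polynomial.X) * (1 - 2 * Polynomial.X - Polynomial.X ^ 2) with hb
  set e : Polynomial ℤ := 2 * Polynomial.X * (1 + Polynomial.X) with he
  set f : Polynomial ℤ := 2 * Polynomial.X * (1 - Polynomial.X) * (1 - 2 * Polynomial.X) with hf
  have expand :
      (1 - PowerSeries.C (R := Polynomial ℤ) a * PowerSeries.X
          + PowerSeries.C (R := Polynomial ℤ) b * PowerSeries.X ^ 2) * Cser
        = Cser - PowerSeries.C (R := Polynomial ℤ) a * (PowerSeries.X * Cser)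
          + PowerSeries.C (R := Polynomial ℤ) b * (PowerSeries.X * (PowerSeries.X * Cser)) := by
    ring
  rw [expand]
  have hXmul0 : ∀ φ : PowerSeries (Polynomial ℤ),
      PowerSeries.coeff (R := Polynomial ℤ) 0 (PowerSeries.X * φ) = 0 := by
    intro φ
    have h1 : PowerSeries.coeff (R := Polynomial ℤ) 0 (PowerSeries.X * φ)
        = PowerSeries.constantCoeff (R := Polynomial ℤ) (PowerSeries.X * φ) := by
      rw [PowerSeries.coeff_zero_eq_constantCoeff]
    rw [h1, map_mul, PowerSeries.constantCoeff_X, zero_mul]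
  apply PowerSeries.ext
  intro k
  rw [map_add, map_sub, PowerSeries.coeff_C_mul, PowerSeries.coeff_C_mul,
    map_sub, PowerSeries.coeff_C_mul, PowerSeries.coeff_C_mul,
    PowerSeries.coeff_X, PowerSeries.coeff_X_pow]
  match k with
  | 0 =>
    rw [Cser_coeff_zero, hXmul0, hXmul0]
    norm_num
  | 1 =>
    rw [Cser_coeff_succ 0, PowerSeries.coeff_succ_X_mul 0 Cser,
      PowerSeries.coeff_succ_X_mul 0 (PowerSeries.X * Cser),
      Cser_coeff_zero, hXmul0]
    norm_num
    rw [Pp_zero, he]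
    ring
  | 2 =>
    rw [Cser_coeff_succ 1, PowerSeries.coeff_succ_X_mul 1 Cser,
      PowerSeries.coeff_succ_X_mul 1 (PowerSeries.X * Cser),
      PowerSeries.coeff_succ_X_mul 0 Cser,
      Cser_coeff_succ 0, Cser_coeff_zero]
    norm_num
    rw [Pp_zero, Pp_one, ha, hf]
    ring
  | (m + 3) =>
    rw [Cser_coeff_succ (m + 2), PowerSeries.coeff_succ_X_mul (m + 2) Cser,
      PowerSeries.coeff_succ_X_mul (m + 2) (PowerSeries.X * Cser),
      PowerSeries.coeff_succ_X_mul (m + 1) Cser,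
      Cser_coeff_succ (m + 1), Cser_coeff_succ m]
    have hne1 : ¬(m + 3 = 1) := by omega
    have hne2 : ¬(m + 3 = 2) := by omega
    rw [if_neg hne1, if_neg hne2]
    rw [Pp_rec m, ha, hb]
    ring
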